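/- Let R be a Noetherian ring, I an ideal, and W a multiplicative set. Then the natural closure of I·W⁻¹R in W⁻¹R equals the expansion of the natural closure of I: (I_W)^♮ = (I^♮)_W. -/
import Mathlib

/-- The integral closure of an ideal `I`: elements `x` satisfying a monic equation
`x^d + a 1 * x^(d-1) + ... + a d = 0` with `a j ∈ I^j` for `1 ≤ j ≤ d`. -/
def Ideal.intClosure {R : Type*} [CommRing R] (I : Ideal R) : Set R :=
  {x | ∃ (d : ℕ) (a : ℕ → R), 0 < d ∧ (∀ j, 1 ≤ j → j ≤ d → a j ∈ I ^ j) ∧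
    x ^ d + ∑ j ∈ Finset.Icc 1 d, a j * x ^ (d - j) = 0}

/-- The inner integral closure of an ideal `I`:
`{ r | ∃ n ≥ 1, r ^ n ∈ integral closure of I ^ (n+1) }`. -/
def Ideal.innerIntClosure {R : Type*} [CommRing R] (I : Ideal R) : Set R :=
  {r | ∃ n : ℕ, 1 ≤ n ∧ r ^ n ∈ (I ^ (n + 1)).intClosure}


/-- The natural closure of an ideal: `I^♮ = I + I_{>1}`. -/
def Ideal.natClosure {R : Type*} [CommRing R] (I : Ideal R) : Ideal R :=
  I ⊔ Ideal.span I.innerIntClosure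

/-- The integral closure of an ideal is closed under scaling. -/
lemma intClosure_smul {R : Type*} [CommRing R] (I : Ideal R) (c : R) {x : R}
    (hx : x ∈ I.intClosure) : c * x ∈ I.intClosure := by
  obtain ⟨d, a, hd, ha, heq⟩ := hx
  refine ⟨d, fun j => c ^ j * a j, hd, fun j h1 h2 => by
    exact Ideal.mul_mem_left _ _ (ha j h1 h2), ?_⟩
  have key : ∀ j ∈ Finset.Icc 1 d, c ^ j * a j * (c * x) ^ (d - j)
      = c ^ d * (a j * x ^ (d - j)) := by
    intro j hj
    have hjd : j + (d - j) = d := Nat.add_sub_cancel' (Finset.mem_Icc.mp hj).2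
    rw [mul_pow, show c ^ d = c ^ j * c ^ (d - j) by rw [← pow_add, hjd]]; ring
  rw [Finset.sum_congr rfl key, ← Finset.mul_sum, mul_pow, ← mul_add, heq, mul_zero]

/-- Ring homomorphisms map integral closure into integral closure of the image ideal. -/
lemma intClosure_map {R S : Type*} [CommRing R] [CommRing S] (f : R →+* S) (I : Ideal R)
    {x : R} (hx : x ∈ I.intClosure) : f x ∈ (I.map f).intClosure := by
  obtain ⟨d, a, hd, ha, heq⟩ := hx
  refine ⟨d, fun j => f (a j), hd, fun j h1 h2 => ?_, ?_⟩
  · rw [← Ideal.map_pow]; exact Ideal.mem_map_of_mem f (ha j h1 h2)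
  · have := congrArg f heq
    simpa only [map_add, map_pow, map_sum, map_mul, map_zero] using this

/-- Clearing denominators: if the image of `s` lies in the integral closure of the
localized ideal, then `u * s` lies in the integral closure of the ideal for some `u ∈ W`. -/
lemma intClosure_descend {R : Type*} [CommRing R] (W : Submonoid R) (K : Ideal R) (s : R)
    (hs : algebraMap R (Localization W) s ∈ (K.map (algebraMap R (Localization W))).intClosure) :
    ∃ u : W, (u : R) * s ∈ K.intClosure := by
  set S := Localization W
  set φ := algebraMap R S with hφ
  obtain ⟨d, a, hd, ha, heq⟩ := hs
  -- choose denominators for coefficients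
  have H : ∀ j, ∃ (b : R) (w : W), j ∈ Finset.Icc 1 d → b ∈ K ^ j ∧ a j * φ w = φ b := by
    intro j
    by_cases hj : j ∈ Finset.Icc 1 d
    · have hmem : a j ∈ (K ^ j).map φ := by
        rw [Ideal.map_pow]
        exact ha j (Finset.mem_Icc.mp hj).1 (Finset.mem_Icc.mp hj).2
      obtain ⟨⟨b, w⟩, hbw⟩ := (IsLocalization.mem_map_algebraMap_iff W S).mp hmem
      exact ⟨b, w, fun _ => ⟨b.2, hbw⟩⟩
    · exact ⟨0, 1, fun h => absurd h hj⟩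
  choose b w hbw using H
  set wp : W := ∏ j ∈ Finset.Icc 1 d, w j with hwp
  -- common-denominator coefficients
  set c : ℕ → R := fun j => b j * (∏ i ∈ (Finset.Icc 1 d).erase j, (w i : R)) * (wp : R) ^ (j - 1)
    with hc
  have hcmem : ∀ j, 1 ≤ j → j ≤ d → c j ∈ K ^ j := fun j h1 h2 =>
    Ideal.mul_mem_right _ _ (Ideal.mul_mem_right _ _
      ((hbw j (Finset.mem_Icc.mpr ⟨h1, h2⟩)).1))
  have hkey : ∀ j ∈ Finset.Icc 1 d, a j * φ wp ^ j = φ (c j) := by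
    intro j hj
    have h1 : 1 ≤ j := (Finset.mem_Icc.mp hj).1
    have hprod : (wp : R) = (w j : R) * ∏ i ∈ (Finset.Icc 1 d).erase j, (w i : R) := by
      rw [hwp, Submonoid.coe_finset_prod]
      exact (Finset.mul_prod_erase _ _ hj).symm
    have hsplit : φ (wp : R) ^ j
        = φ (w j : R) * φ (∏ i ∈ (Finset.Icc 1 d).erase j, (w i : R)) * φ (wp : R) ^ (j - 1) := by
      conv_lhs => rw [show j = (j - 1) + 1 from (Nat.sub_add_cancel h1).symm]
      rw [pow_succ, hprod, map_mul]; ring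
    calc a j * φ wp ^ j
        = (a j * φ (w j)) * (φ (∏ i ∈ (Finset.Icc 1 d).erase j, (w i : R))
            * φ (wp : R) ^ (j - 1)) := by rw [hsplit]; ring
      _ = φ (c j) := by
          rw [(hbw j hj).2, hc]; simp only [map_mul, map_pow]; ring
  -- the cleared equation
  set E : R := ((wp : R) * s) ^ d + ∑ j ∈ Finset.Icc 1 d, c j * ((wp : R) * s) ^ (d - j)
    with hE
  have hφE : φ E = 0 := by
    have term : ∀ j ∈ Finset.Icc 1 d,
        φ (c j * ((wp : R) * s) ^ (d - j)) = φ wp ^ d * (a j * φ s ^ (d - j)) := by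
      intro j hj
      have hjd : j + (d - j) = d := Nat.add_sub_cancel' (Finset.mem_Icc.mp hj).2
      rw [map_mul, ← hkey j hj, map_pow, map_mul,
        show φ (wp : R) ^ d = φ (wp : R) ^ j * φ (wp : R) ^ (d - j) by rw [← pow_add, hjd]]
      ring
    rw [hE, map_add, map_sum, Finset.sum_congr rfl term, ← Finset.mul_sum,
      map_pow, map_mul, mul_pow, show φ (wp : R) ^ d * φ s ^ d = φ wp ^ d * φ s ^ d from rfl,
      ← mul_add, heq, mul_zero]
  obtain ⟨v, hv⟩ := (IsLocalization.map_eq_zero_iff W S E).mp hφE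
  refine ⟨v * wp, ⟨d, fun j => (v : R) ^ j * c j, hd,
    fun j h1 h2 => Ideal.mul_mem_left _ _ (hcmem j h1 h2), ?_⟩⟩
  have term2 : ∀ j ∈ Finset.Icc 1 d,
      (v : R) ^ j * c j * ((↑(v * wp) : R) * s) ^ (d - j)
        = (v : R) ^ d * (c j * ((wp : R) * s) ^ (d - j)) := by
    intro j hj
    have hjd : j + (d - j) = d := Nat.add_sub_cancel' (Finset.mem_Icc.mp hj).2
    rw [Submonoid.coe_mul,
      show (v : R) ^ d = (v : R) ^ j * (v : R) ^ (d - j) by rw [← pow_add, hjd]]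
    ring
  rw [Finset.sum_congr rfl term2, ← Finset.mul_sum,
    show ((↑(v * wp) : R) * s) ^ d = (v : R) ^ d * ((wp : R) * s) ^ d by
      rw [Submonoid.coe_mul]; ring, ← mul_add, ← hE,
    show (v : R) ^ d = (v : R) ^ (d - 1) * (v : R) by
      rw [← pow_succ, Nat.sub_add_cancel hd], mul_assoc, hv, mul_zero]

/-- Natural closure commutes with localization: `(I_W)^♮ = (I^♮)_W`. -/
theorem stmt16 {R : Type*} [CommRing R] [IsNoetherianRing R] (I : Ideal R)
    (W : Submonoid R) :
    (Ideal.map (algebraMap R (Localization W)) I).natClosure =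
      Ideal.map (algebraMap R (Localization W)) I.natClosure := by
  set S := Localization W
  set φ := algebraMap R S with hφ
  apply le_antisymm
  · -- hard direction
    rw [Ideal.natClosure]
    apply sup_le
    · exact Ideal.map_mono le_sup_left
    · rw [Ideal.span_le]
      rintro x ⟨n, hn, hx⟩
      obtain ⟨⟨s, w0⟩, hsw⟩ := IsLocalization.surj W x
      -- φ (s ^ n) is in the integral closure of map (I ^ (n+1))
      have hs : φ (s ^ n) ∈ ((I ^ (n + 1)).map φ).intClosure := by
        have h1 : φ s ^ n = φ w0 ^ n * x ^ n := by rw [← hsw]; ring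
        rw [map_pow, h1, Ideal.map_pow]
        exact intClosure_smul _ _ hx
      obtain ⟨u, hu⟩ := intClosure_descend W (I ^ (n + 1)) (s ^ n) hs
      have hmem : (u : R) * s ∈ I.innerIntClosure := by
        refine ⟨n, hn, ?_⟩
        have : ((u : R) * s) ^ n = (u : R) ^ (n - 1) * ((u : R) * s ^ n) := by
          rw [mul_pow, show (u : R) ^ n = (u : R) ^ (n - 1) * (u : R) by
            rw [← pow_succ, Nat.sub_add_cancel hn]]
          ring
        rw [this]
        exact intClosure_smul _ _ hu
      have hnat : (u : R) * s ∈ I.natClosure :=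
        Ideal.mem_sup_right (Ideal.subset_span hmem)
      have hunit : IsUnit (φ ((u : R) * (w0 : R))) := by
        simpa using IsLocalization.map_units S (u * w0)
      have heq : φ ((u : R) * (w0 : R)) * x = φ ((u : R) * s) := by
        rw [map_mul, map_mul, mul_assoc, mul_comm (φ (w0 : R)) x, hsw]
      have : φ ((u : R) * s) ∈ I.natClosure.map φ := Ideal.mem_map_of_mem φ hnat
      rw [← heq] at this
      exact (Ideal.unit_mul_mem_iff_mem _ hunit).mp this
  · -- easy direction
    rw [Ideal.natClosure, Ideal.map_sup, Ideal.map_span]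
    apply sup_le
    · exact le_sup_left
    · refine le_trans (Ideal.span_mono ?_) le_sup_right
      rintro y ⟨r, ⟨n, hn, hr⟩, rfl⟩
      refine ⟨n, hn, ?_⟩
      rw [← map_pow, ← Ideal.map_pow]
      exact intClosure_map φ (I ^ (n + 1)) hr
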